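/- (Theorem 1(ii), gradient of the cost.) Fix Q, E ∈ ℝ^{n×n} and x_0 ∈ ℝ^n, and define J : ℝ^{N+1} → ℝ by J(δ) = x_0ᵀ S_0(δ) x_0, where S_0(δ) is given by the defining formulas (with Φ and each M_q depending on δ). Then for every δ with nonnegative entries and every i = 0, …, N, the partial derivative ∂J/∂δ_i exists at δ and equals x_{i+1}ᵀ C_i x_{i+1}, where x_{i+1} = Φ(i+1, 0) x_0 and C_i = Q + A_iᵀ S_{i+1} + S_{i+1} A_i are evaluated at δ. -/

import Mathlib

open Matrix

/-- Matrix exponential of a real square matrix. -/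
noncomputable def expM {n : ℕ} (A : Matrix (Fin n) (Fin n) ℝ) : Matrix (Fin n) (Fin n) ℝ :=
  NormedSpace.exp A

/-- Switching times: `tau δ i = ∑_{j<i} δ j`. -/
noncomputable def tau (δ : ℕ → ℝ) (i : ℕ) : ℝ := ∑ j ∈ Finset.range i, δ j

/-- State transition matrix `Φ(l, i) = exp(δ_{l-1} A_{l-1}) ⋯ exp(δ_i A_i)`
(ordered product, larger indices on the left; `Φ(i,i) = 1`). -/
noncomputable def Phi {n : ℕ} (A : ℕ → Matrix (Fin n) (Fin n) ℝ) (δ : ℕ → ℝ)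
    (l i : ℕ) : Matrix (Fin n) (Fin n) ℝ :=
  (((List.range (l - i)).reverse).map (fun p => expM (δ (i + p) • A (i + p)))).prod

/-- `M_q = ∫_0^{δ_q} exp(η A_q)ᵀ Q exp(η A_q) dη`, taken entrywise. -/
noncomputable def Mmat {n : ℕ} (A : ℕ → Matrix (Fin n) (Fin n) ℝ) (δ : ℕ → ℝ)
    (Q : Matrix (Fin n) (Fin n) ℝ) (q : ℕ) : Matrix (Fin n) (Fin n) ℝ :=
  Matrix.of fun k l => ∫ η in (0:ℝ)..δ q, ((expM (η • A q))ᵀ * Q * expM (η • A q)) k l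

/-- `P_a = ∑_{q=a}^N Φ(q,a)ᵀ M_q Φ(q,a)`. -/
noncomputable def Pmat {n : ℕ} (N : ℕ) (A : ℕ → Matrix (Fin n) (Fin n) ℝ) (δ : ℕ → ℝ)
    (Q : Matrix (Fin n) (Fin n) ℝ) (a : ℕ) : Matrix (Fin n) (Fin n) ℝ :=
  ∑ q ∈ Finset.Icc a N, (Phi A δ q a)ᵀ * Mmat A δ Q q * Phi A δ q a

/-- `F_a = Φ(N+1,a)ᵀ E Φ(N+1,a)`. -/
noncomputable def Fmat {n : ℕ} (N : ℕ) (A : ℕ → Matrix (Fin n) (Fin n) ℝ) (δ : ℕ → ℝ)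
    (E : Matrix (Fin n) (Fin n) ℝ) (a : ℕ) : Matrix (Fin n) (Fin n) ℝ :=
  (Phi A δ (N + 1) a)ᵀ * E * Phi A δ (N + 1) a

/-- `S_a = P_a + F_a`. -/
noncomputable def Smat {n : ℕ} (N : ℕ) (A : ℕ → Matrix (Fin n) (Fin n) ℝ) (δ : ℕ → ℝ)
    (Q E : Matrix (Fin n) (Fin n) ℝ) (a : ℕ) : Matrix (Fin n) (Fin n) ℝ :=
  Pmat N A δ Q a + Fmat N A δ E a

/-- A trajectory of the switched system: continuous on `[0, τ_{N+1}]`, starting at `x0`,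
satisfying `x' = A_i x` on each open interval `(τ_i, τ_{i+1})`. -/
def IsTrajectory {n : ℕ} (N : ℕ) (A : ℕ → Matrix (Fin n) (Fin n) ℝ) (δ : ℕ → ℝ)
    (x0 : Fin n → ℝ) (x : ℝ → Fin n → ℝ) : Prop :=
  ContinuousOn x (Set.Icc 0 (tau δ (N + 1))) ∧ x 0 = x0 ∧
    ∀ i ≤ N, ∀ t ∈ Set.Ioo (tau δ i) (tau δ (i + 1)),
      HasDerivAt x ((A i).mulVec (x t)) t

/-! ### Auxiliary lemmas -/

section Aux

variable {n : ℕ}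

section deriv
attribute [local instance] Matrix.linftyOpNormedRing Matrix.linftyOpNormedAlgebra

noncomputable def entryCLM (k l : Fin n) : Matrix (Fin n) (Fin n) ℝ →L[ℝ] ℝ :=
  LinearMap.toContinuousLinearMap
    { toFun := fun M => M k l
      map_add' := fun _ _ => rfl
      map_smul' := fun _ _ => rfl }

lemma hasDerivAt_expM_entry (B : Matrix (Fin n) (Fin n) ℝ) (t : ℝ) (k l : Fin n) :
    HasDerivAt (fun s : ℝ => expM (s • B) k l) ((B * expM (t • B)) k l) t := by
  have h : HasDerivAt (fun s : ℝ => NormedSpace.exp (s • B)) (B * NormedSpace.exp (t • B)) t :=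
    hasDerivAt_exp_smul_const' B t
  have := (entryCLM k l).hasFDerivAt.comp t h.hasFDerivAt
  have h2 : HasDerivAt (fun s : ℝ => entryCLM k l (NormedSpace.exp (s • B)))
      (entryCLM k l (B * NormedSpace.exp (t • B))) t := by
    exact (entryCLM k l).hasFDerivAt.comp_hasDerivAt t h
  exact h2

lemma continuous_expM_entry (B : Matrix (Fin n) (Fin n) ℝ) (k l : Fin n) :
    Continuous fun s : ℝ => expM (s • B) k l :=
  continuous_iff_continuousAt.2 fun t => (hasDerivAt_expM_entry B t k l).continuousAt

end deriv

variable (A : ℕ → Matrix (Fin n) (Fin n) ℝ) (δ δ' : ℕ → ℝ)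

lemma Phi_self (i : ℕ) : Phi A δ i i = 1 := by simp [Phi]

lemma Phi_succ {i l : ℕ} (h : i ≤ l) :
    Phi A δ (l+1) i = expM (δ l • A l) * Phi A δ l i := by
  unfold Phi
  rw [Nat.succ_sub h, List.range_succ, List.reverse_append]
  simp [Nat.add_sub_cancel' h]

lemma Phi_mul {i j l : ℕ} (hij : i ≤ j) (hjl : j ≤ l) :
    Phi A δ l j * Phi A δ j i = Phi A δ l i := by
  induction l, hjl using Nat.le_induction with
  | base => rw [Phi_self, one_mul]
  | succ l hjl ih =>
    rw [Phi_succ A δ hjl, Phi_succ A δ (hij.trans hjl), mul_assoc, ih]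

lemma Phi_congr {a l : ℕ} (h : ∀ p, a ≤ p → p < l → δ p = δ' p) :
    Phi A δ l a = Phi A δ' l a := by
  unfold Phi
  congr 1
  refine List.map_congr_left ?_
  intro p hp
  rw [List.mem_reverse, List.mem_range] at hp
  rw [h (a + p) (Nat.le_add_right a p) (by omega)]

lemma dot_sandwich (B M : Matrix (Fin n) (Fin n) ℝ) (v w : Fin n → ℝ) :
    v ⬝ᵥ (Bᵀ * M * B) *ᵥ w = (B *ᵥ v) ⬝ᵥ M *ᵥ (B *ᵥ w) := by
  rw [← mulVec_mulVec, ← mulVec_mulVec, dotProduct_mulVec v, vecMul_transpose]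

lemma dot_eq_sum (M : Matrix (Fin n) (Fin n) ℝ) (v w : Fin n → ℝ) :
    v ⬝ᵥ M *ᵥ w = ∑ k, ∑ l, (v k * w l) * M k l := by
  simp only [dotProduct, mulVec, Finset.mul_sum]
  exact Finset.sum_congr rfl fun k _ => Finset.sum_congr rfl fun l _ => by ring

lemma dot_sum_mulVec {ι : Type*} (s : Finset ι) (M : ι → Matrix (Fin n) (Fin n) ℝ)
    (v w : Fin n → ℝ) : v ⬝ᵥ (∑ q ∈ s, M q) *ᵥ w = ∑ q ∈ s, v ⬝ᵥ (M q) *ᵥ w := by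
  induction s using Finset.cons_induction with
  | empty => simp
  | cons a s ha ih => rw [Finset.sum_cons, Finset.sum_cons, Matrix.add_mulVec,
      dotProduct_add, ih]

lemma intInt_sum {ι : Type*} (s : Finset ι) (g : ι → ℝ → ℝ) (a b : ℝ)
    (h : ∀ i ∈ s, IntervalIntegrable (g i) MeasureTheory.volume a b) :
    IntervalIntegrable (fun η => ∑ i ∈ s, g i η) MeasureTheory.volume a b := by
  have e : (∑ i ∈ s, g i) = fun η => ∑ i ∈ s, g i η := by ext η; simp
  exact e ▸ IntervalIntegrable.sum s h

lemma intInt_integral_sum {ι : Type*} (s : Finset ι) (g : ι → ℝ → ℝ) (a b : ℝ)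
    (h : ∀ i ∈ s, IntervalIntegrable (g i) MeasureTheory.volume a b) :
    (∫ η in a..b, ∑ i ∈ s, g i η) = ∑ i ∈ s, ∫ η in a..b, g i η :=
  intervalIntegral.integral_finset_sum h

lemma dot_integral (f : ℝ → Matrix (Fin n) (Fin n) ℝ)
    (hf : ∀ k l, Continuous fun η => f η k l) (a b : ℝ) (v w : Fin n → ℝ) :
    v ⬝ᵥ (Matrix.of fun k l => ∫ η in a..b, f η k l) *ᵥ w
      = ∫ η in a..b, v ⬝ᵥ (f η) *ᵥ w := by
  have h2 : ∀ η, v ⬝ᵥ (f η) *ᵥ w = ∑ k, ∑ l, (v k * w l) * f η k l :=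
    fun η => dot_eq_sum (f η) v w
  rw [intervalIntegral.integral_congr (g := fun η => ∑ k, ∑ l, (v k * w l) * f η k l)
    (fun η _ => h2 η)]
  rw [dot_eq_sum]
  have hint : ∀ k l : Fin n, IntervalIntegrable (fun η => (v k * w l) * f η k l)
      MeasureTheory.volume a b :=
    fun k l => (continuous_const.mul (hf k l)).intervalIntegrable _ _
  refine Eq.symm ?_
  calc (∫ η in a..b, ∑ k, ∑ l, (v k * w l) * f η k l)
      = ∑ k, ∫ η in a..b, ∑ l, (v k * w l) * f η k l :=
        intInt_integral_sum Finset.univ (fun k η => ∑ l, (v k * w l) * f η k l) a b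
          (fun k _ => intInt_sum Finset.univ (fun l η => (v k * w l) * f η k l) a b
            (fun l _ => hint k l))
    _ = ∑ k, ∑ l, ∫ η in a..b, (v k * w l) * f η k l :=
        Finset.sum_congr rfl fun k _ =>
          intInt_integral_sum Finset.univ (fun l η => (v k * w l) * f η k l) a b
            (fun l _ => hint k l)
    _ = ∑ k, ∑ l, (v k * w l) * ∫ η in a..b, f η k l := by
        simp [intervalIntegral.integral_const_mul]
    _ = ∑ k, ∑ l, (v k * w l) * (Matrix.of fun k l => ∫ η in a..b, f η k l) k l := rfl

lemma continuous_sandwich_entry (B Q : Matrix (Fin n) (Fin n) ℝ) (k l : Fin n) :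
    Continuous fun η : ℝ => ((expM (η • B))ᵀ * Q * expM (η • B)) k l := by
  simp only [Matrix.mul_apply, Matrix.transpose_apply]
  exact continuous_finset_sum _ fun m _ =>
    (continuous_finset_sum _ fun p _ =>
      (continuous_expM_entry B p k).mul continuous_const).mul (continuous_expM_entry B m l)

lemma dot_Mmat (Q : Matrix (Fin n) (Fin n) ℝ) (q : ℕ) (v w : Fin n → ℝ) :
    v ⬝ᵥ (Mmat A δ Q q) *ᵥ w =
      ∫ η in (0:ℝ)..δ q,
        ((expM (η • A q)) *ᵥ v) ⬝ᵥ Q *ᵥ ((expM (η • A q)) *ᵥ w) := by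
  rw [Mmat, dot_integral _ (fun k l => continuous_sandwich_entry (A q) Q k l)]
  exact intervalIntegral.integral_congr fun η _ => dot_sandwich _ _ _ _

lemma continuous_mulVec_entry (B : Matrix (Fin n) (Fin n) ℝ) (y : Fin n → ℝ) (k : Fin n) :
    Continuous fun η : ℝ => (expM (η • B) *ᵥ y) k := by
  simp only [Matrix.mulVec, dotProduct]
  exact continuous_finset_sum _ fun j _ => (continuous_expM_entry B k j).mul continuous_const

lemma continuous_dot (f g : ℝ → Fin n → ℝ) (M : Matrix (Fin n) (Fin n) ℝ)
    (hf : ∀ k, Continuous fun t => f t k) (hg : ∀ k, Continuous fun t => g t k) :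
    Continuous fun t => f t ⬝ᵥ M *ᵥ g t := by
  have h : ∀ t, f t ⬝ᵥ M *ᵥ g t = ∑ k, ∑ l, (f t k * g t l) * M k l :=
    fun t => dot_eq_sum M (f t) (g t)
  rw [funext h]
  exact continuous_finset_sum _ fun k _ => continuous_finset_sum _ fun l _ =>
    ((hf k).mul (hg l)).mul continuous_const

lemma hasDerivAt_dot (f g : ℝ → Fin n → ℝ) (M : Matrix (Fin n) (Fin n) ℝ) (t : ℝ)
    (f' g' : Fin n → ℝ)
    (hf : ∀ k, HasDerivAt (fun s => f s k) (f' k) t)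
    (hg : ∀ k, HasDerivAt (fun s => g s k) (g' k) t) :
    HasDerivAt (fun s => f s ⬝ᵥ M *ᵥ g s) (f' ⬝ᵥ M *ᵥ g t + f t ⬝ᵥ M *ᵥ g') t := by
  have h : ∀ s, f s ⬝ᵥ M *ᵥ g s = ∑ k, ∑ l, (f s k * g s l) * M k l :=
    fun s => dot_eq_sum M (f s) (g s)
  rw [funext h]
  have H : HasDerivAt (fun s => ∑ k, ∑ l, (f s k * g s l) * M k l)
      (∑ k, ∑ l, ((f' k * g t l + f t k * g' l) * M k l)) t := by
    apply HasDerivAt.fun_sum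
    intro k _
    apply HasDerivAt.fun_sum
    intro l _
    exact ((hf k).mul (hg l)).mul_const (M k l)
  convert H using 1
  rw [dot_eq_sum, dot_eq_sum, ← Finset.sum_add_distrib]
  refine Finset.sum_congr rfl fun k _ => ?_
  rw [← Finset.sum_add_distrib]
  exact Finset.sum_congr rfl fun l _ => by ring

lemma hasDerivAt_expM_mulVec (B : Matrix (Fin n) (Fin n) ℝ) (y : Fin n → ℝ) (t : ℝ)
    (k : Fin n) :
    HasDerivAt (fun s : ℝ => (expM (s • B) *ᵥ y) k)
      ((B *ᵥ (expM (t • B) *ᵥ y)) k) t := by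
  have H : HasDerivAt (fun s : ℝ => ∑ j, expM (s • B) k j * y j)
      (∑ j, (B * expM (t • B)) k j * y j) t := by
    apply HasDerivAt.fun_sum
    intro j _
    exact (hasDerivAt_expM_entry B t k j).mul_const (y j)
  have e1 : (fun s : ℝ => (expM (s • B) *ᵥ y) k) = fun s : ℝ => ∑ j, expM (s • B) k j * y j := by
    funext s; simp [Matrix.mulVec, dotProduct]
  have e2 : (B *ᵥ (expM (t • B) *ᵥ y)) k = ∑ j, (B * expM (t • B)) k j * y j := by
    rw [mulVec_mulVec]; simp [Matrix.mulVec, dotProduct]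
  rw [e1, e2]
  exact H

end Aux

section Decomp

variable {n : ℕ} (A : ℕ → Matrix (Fin n) (Fin n) ℝ) (δ : ℕ → ℝ)
  (Q E : Matrix (Fin n) (Fin n) ℝ) (x0 : Fin n → ℝ)

/-- Key decomposition of the cost as a function of the `i`-th switching interval. -/
lemma Smat_dot_decomp {N i : ℕ} (hiN : i ≤ N) (s : ℝ) :
    x0 ⬝ᵥ (Smat N A (Function.update δ i s) Q E 0) *ᵥ x0
      = (∑ q ∈ Finset.range i,
          x0 ⬝ᵥ ((Phi A δ q 0)ᵀ * Mmat A δ Q q * Phi A δ q 0) *ᵥ x0)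
        + (∫ η in (0:ℝ)..s,
            ((expM (η • A i)) *ᵥ ((Phi A δ i 0) *ᵥ x0)) ⬝ᵥ
              Q *ᵥ ((expM (η • A i)) *ᵥ ((Phi A δ i 0) *ᵥ x0)))
        + ((expM (s • A i)) *ᵥ ((Phi A δ i 0) *ᵥ x0)) ⬝ᵥ
            (Smat N A δ Q E (i+1)) *ᵥ ((expM (s • A i)) *ᵥ ((Phi A δ i 0) *ᵥ x0)) := by
  set δ' := Function.update δ i s with hδ'
  have hup : ∀ a l : ℕ, (i < a ∨ l ≤ i) → Phi A δ' l a = Phi A δ l a := by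
    intro a l h
    apply Phi_congr
    intro p hp1 hp2
    exact Function.update_of_ne (show p ≠ i by omega) s δ
  have hM : ∀ q : ℕ, q ≠ i → Mmat A δ' Q q = Mmat A δ Q q := by
    intro q hq
    unfold Mmat
    rw [hδ', Function.update_of_ne hq]
  set zs := (expM (s • A i)) *ᵥ ((Phi A δ i 0) *ᵥ x0) with hzs
  have hfac : ∀ q : ℕ, i + 1 ≤ q → (Phi A δ' q 0) *ᵥ x0 = (Phi A δ q (i+1)) *ᵥ zs := by
    intro q hq
    rw [← Phi_mul A δ' (Nat.zero_le (i+1)) hq, hup (i+1) q (Or.inl (Nat.lt_succ_self i)),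
      Phi_succ A δ' (Nat.zero_le i), hup 0 i (Or.inr le_rfl), hδ', Function.update_self,
      ← mulVec_mulVec, ← mulVec_mulVec]
  have hterm : ∀ q : ℕ, i + 1 ≤ q → q ≤ N →
      x0 ⬝ᵥ ((Phi A δ' q 0)ᵀ * Mmat A δ' Q q * Phi A δ' q 0) *ᵥ x0
        = zs ⬝ᵥ ((Phi A δ q (i+1))ᵀ * Mmat A δ Q q * Phi A δ q (i+1)) *ᵥ zs := by
    intro q hq hqN
    rw [dot_sandwich, hfac q hq, hM q (by omega), ← dot_sandwich]
  have hF : x0 ⬝ᵥ (Fmat N A δ' E 0) *ᵥ x0 = zs ⬝ᵥ (Fmat N A δ E (i+1)) *ᵥ zs := by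
    unfold Fmat
    rw [dot_sandwich, hfac (N+1) (by omega), ← dot_sandwich]
  have hIcc : Finset.Icc 0 N = Finset.range i ∪ insert i (Finset.Icc (i+1) N) := by
    ext q
    simp only [Finset.mem_Icc, Finset.mem_union, Finset.mem_range, Finset.mem_insert]
    omega
  have hdisj : Disjoint (Finset.range i) (insert i (Finset.Icc (i+1) N)) := by
    rw [Finset.disjoint_left]
    intro q hq hq'
    simp only [Finset.mem_range] at hq
    simp only [Finset.mem_insert, Finset.mem_Icc] at hq'
    omega
  have hnotmem : i ∉ Finset.Icc (i+1) N := by simp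
  rw [Smat, Matrix.add_mulVec, dotProduct_add, Pmat, dot_sum_mulVec, hIcc,
    Finset.sum_union hdisj, Finset.sum_insert hnotmem]
  have h1 : ∑ q ∈ Finset.range i, x0 ⬝ᵥ ((Phi A δ' q 0)ᵀ * Mmat A δ' Q q * Phi A δ' q 0) *ᵥ x0
      = ∑ q ∈ Finset.range i, x0 ⬝ᵥ ((Phi A δ q 0)ᵀ * Mmat A δ Q q * Phi A δ q 0) *ᵥ x0 := by
    refine Finset.sum_congr rfl fun q hq => ?_
    rw [Finset.mem_range] at hq
    rw [hup 0 q (Or.inr (by omega)), hM q (by omega)]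
  have h2 : x0 ⬝ᵥ ((Phi A δ' i 0)ᵀ * Mmat A δ' Q i * Phi A δ' i 0) *ᵥ x0
      = ∫ η in (0:ℝ)..s,
          ((expM (η • A i)) *ᵥ ((Phi A δ i 0) *ᵥ x0)) ⬝ᵥ
            Q *ᵥ ((expM (η • A i)) *ᵥ ((Phi A δ i 0) *ᵥ x0)) := by
    rw [hup 0 i (Or.inr le_rfl), dot_sandwich, dot_Mmat]
    have : δ' i = s := by rw [hδ', Function.update_self]
    rw [this]
  have h3 : ∑ q ∈ Finset.Icc (i+1) N,
        x0 ⬝ᵥ ((Phi A δ' q 0)ᵀ * Mmat A δ' Q q * Phi A δ' q 0) *ᵥ x0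
      = ∑ q ∈ Finset.Icc (i+1) N,
          zs ⬝ᵥ ((Phi A δ q (i+1))ᵀ * Mmat A δ Q q * Phi A δ q (i+1)) *ᵥ zs := by
    refine Finset.sum_congr rfl fun q hq => ?_
    rw [Finset.mem_Icc] at hq
    exact hterm q hq.1 hq.2
  rw [h1, h2, h3, hF]
  rw [Smat, Matrix.add_mulVec, dotProduct_add, Pmat, dot_sum_mulVec]
  ring

end Decomp

/-- Theorem 1(ii): the gradient of `J(δ) = x_0ᵀ S_0(δ) x_0` satisfies
`∂J/∂δ_i = x_{i+1}ᵀ C_i x_{i+1}` with `C_i = Q + A_iᵀ S_{i+1} + S_{i+1} A_i` and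
`x_{i+1} = Φ(i+1,0) x_0`. -/
theorem stmt9 {n N : ℕ} (A : ℕ → Matrix (Fin n) (Fin n) ℝ) (δ : ℕ → ℝ)
    (hδ : ∀ q ≤ N, 0 ≤ δ q) (Q E : Matrix (Fin n) (Fin n) ℝ) (x0 : Fin n → ℝ)
    (i : ℕ) (hiN : i ≤ N) :
    HasDerivAt
      (fun s : ℝ => x0 ⬝ᵥ (Smat N A (Function.update δ i s) Q E 0).mulVec x0)
      (((Phi A δ (i + 1) 0).mulVec x0) ⬝ᵥ
        (Q + (A i)ᵀ * Smat N A δ Q E (i + 1) + Smat N A δ Q E (i + 1) * A i).mulVec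
          ((Phi A δ (i + 1) 0).mulVec x0))
      (δ i) := by
  set y := (Phi A δ i 0) *ᵥ x0 with hy
  set S := Smat N A δ Q E (i+1) with hS
  set z : ℝ → Fin n → ℝ := fun s => (expM (s • A i)) *ᵥ y with hz
  set zd := z (δ i) with hzd
  set w := (A i) *ᵥ zd with hw
  have hzk : ∀ k, Continuous fun s => z s k := fun k => continuous_mulVec_entry (A i) y k
  have hφ : Continuous fun η => z η ⬝ᵥ Q *ᵥ z η := continuous_dot z z Q hzk hzk
  -- derivative of the integral part
  have hI : HasDerivAt (fun s => ∫ η in (0:ℝ)..s, z η ⬝ᵥ Q *ᵥ z η)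
      (zd ⬝ᵥ Q *ᵥ zd) (δ i) := by
    have := intervalIntegral.integral_hasDerivAt_right
      (hφ.intervalIntegrable 0 (δ i))
      (hφ.aestronglyMeasurable.stronglyMeasurableAtFilter)
      hφ.continuousAt
    exact this
  -- derivative of the entries of z
  have hzdk : ∀ k, HasDerivAt (fun s => z s k) (w k) (δ i) := by
    intro k
    exact hasDerivAt_expM_mulVec (A i) y (δ i) k
  -- derivative of the quadratic part
  have hg : HasDerivAt (fun s => z s ⬝ᵥ S *ᵥ z s)
      (w ⬝ᵥ S *ᵥ zd + zd ⬝ᵥ S *ᵥ w) (δ i) :=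
    hasDerivAt_dot z z S (δ i) w w hzdk hzdk
  -- assemble
  have hfun : (fun s : ℝ => x0 ⬝ᵥ (Smat N A (Function.update δ i s) Q E 0).mulVec x0)
      = fun s : ℝ =>
        (∑ q ∈ Finset.range i, x0 ⬝ᵥ ((Phi A δ q 0)ᵀ * Mmat A δ Q q * Phi A δ q 0) *ᵥ x0)
        + (∫ η in (0:ℝ)..s, z η ⬝ᵥ Q *ᵥ z η)
        + z s ⬝ᵥ S *ᵥ z s := by
    funext s
    exact Smat_dot_decomp A δ Q E x0 hiN s
  rw [hfun]
  have H := ((hasDerivAt_const (δ i)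
      (∑ q ∈ Finset.range i, x0 ⬝ᵥ ((Phi A δ q 0)ᵀ * Mmat A δ Q q * Phi A δ q 0) *ᵥ x0)).add
    hI).add hg
  refine H.congr_deriv ?_
  have hx1 : (Phi A δ (i + 1) 0) *ᵥ x0 = zd := by
    rw [Phi_succ A δ (Nat.zero_le i), ← mulVec_mulVec]
  rw [hx1]
  rw [Matrix.add_mulVec, Matrix.add_mulVec, dotProduct_add, dotProduct_add]
  have hAS : zd ⬝ᵥ ((A i)ᵀ * S) *ᵥ zd = w ⬝ᵥ S *ᵥ zd := by
    rw [← mulVec_mulVec, dotProduct_mulVec zd ((A i)ᵀ), vecMul_transpose, hw]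
  have hSA : zd ⬝ᵥ (S * A i) *ᵥ zd = zd ⬝ᵥ S *ᵥ w := by
    rw [← mulVec_mulVec, hw]
  rw [hAS, hSA]
  ring
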